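/- Let H be a Hilbert space and let (g_i)_{i≥1} be a sequence of elements of H whose linear span is dense in H. For n ≥ 1 define the symmetric bilinear form Q_n on H by ⟨h, Q_n h⟩ = Σ_{i=1}^n ⟨g_i, h⟩². Then for every orthogonal projection Π : H → H with finite-dimensional range and every α > 0, there exist an integer N ≥ 1 and a constant c > 0 such that Σ_{i=1}^n ⟨g_i, h⟩² ≥ c ‖Πh‖² for every n ≥ N and every h ∈ H satisfying ‖Πh‖ ≥ α‖h‖. -/

import Mathlib

open scoped RealInnerProductSpace

set_option maxHeartbeats 1000000 in
/-- Lemma 8.1: if the linear span of the sequence `(g_i)` is dense in the Hilbert space `H`,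
then for every orthogonal projection `Π` with finite-dimensional range and every `α > 0` there
are `N ≥ 1` and `c > 0` such that `Σ_{i<n} ⟨g_i, h⟩² ≥ c ‖Πh‖²` whenever `n ≥ N` and
`‖Πh‖ ≥ α‖h‖`. -/
theorem stmt4 {H : Type*} [NormedAddCommGroup H] [InnerProductSpace ℝ H] [CompleteSpace H]
    (g : ℕ → H) (hdense : Dense (Submodule.span ℝ (Set.range g) : Set H))
    (P : H →L[ℝ] H)
    (hP_idem : P ∘L P = P)
    (hP_sa : ∀ x y : H, ⟪P x, y⟫ = ⟪x, P y⟫)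
    (hfin : FiniteDimensional ℝ (LinearMap.range (P : H →ₗ[ℝ] H)))
    {α : ℝ} (hα : 0 < α) :
    ∃ N : ℕ, 1 ≤ N ∧ ∃ c : ℝ, 0 < c ∧ ∀ n : ℕ, N ≤ n → ∀ h : H, α * ‖h‖ ≤ ‖P h‖ →
      c * ‖P h‖ ^ 2 ≤ ∑ i ∈ Finset.range n, ⟪g i, h⟫ ^ 2 := by
  have h8 : (0:ℝ) < α / 8 := by positivity
  -- approximation of any vector by a finite linear combination of the `g i`
  have happrox : ∀ u : H, ∃ c : ℕ →₀ ℝ,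
      ‖u - c.sum (fun i a => a • g i)‖ < α / 8 := by
    intro u
    obtain ⟨v, hv, hdist⟩ := hdense.exists_dist_lt u h8
    rw [SetLike.mem_coe, Finsupp.mem_span_range_iff_exists_finsupp] at hv
    obtain ⟨c, hc⟩ := hv
    exact ⟨c, by rw [hc, ← dist_eq_norm]; exact hdist⟩
  choose Φ hΦ using happrox
  -- basic facts about P
  have hPP : ∀ x : H, P (P x) = P x := by
    intro x
    have := congrArg (fun T : H →L[ℝ] H => T x) hP_idem
    simpa using this
  have hPh : ∀ x : H, ⟪P x, x⟫ = ‖P x‖ ^ 2 := by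
    intro x
    have h1 : ⟪P x, P x⟫ = ⟪x, P (P x)⟫ := hP_sa x (P x)
    rw [hPP] at h1
    rw [← real_inner_self_eq_norm_sq, h1, real_inner_comm]
  -- compactness of the unit sphere of the range of P
  set F : Submodule ℝ H := LinearMap.range (P : H →ₗ[ℝ] H) with hF
  let K : Set H := Subtype.val '' (Metric.sphere (0 : F) 1)
  have hK : IsCompact K := (isCompact_sphere (0 : F) 1).image continuous_subtype_val
  obtain ⟨t, htK, hcover⟩ := hK.elim_nhds_subcover (fun u => Metric.ball u (α / 8))
    (fun u _ => Metric.ball_mem_nhds u h8)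
  -- definitions of N and c
  set N : ℕ := (t.sup fun u => (Φ u).support.sup id) + 1 with hN
  set B : ℝ := ∑ u ∈ t, ∑ i ∈ (Φ u).support, (Φ u i) ^ 2 with hB
  have hB0 : 0 ≤ B := Finset.sum_nonneg fun u _ =>
    Finset.sum_nonneg fun i _ => sq_nonneg _
  have hB1 : (0:ℝ) < B + 1 := by linarith
  refine ⟨N, le_add_self, 9 / (16 * (B + 1)), by positivity, ?_⟩
  intro n hn h hh
  have hsum0 : (0:ℝ) ≤ ∑ i ∈ Finset.range n, ⟪g i, h⟫ ^ 2 :=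
    Finset.sum_nonneg fun i _ => sq_nonneg _
  by_cases hP0 : P h = 0
  · simp [hP0, hsum0]
  have hPhpos : 0 < ‖P h‖ := norm_pos_iff.mpr hP0
  -- the normalized projection lies in K
  set w : H := ‖P h‖⁻¹ • P h with hw
  have hwF : w ∈ F := F.smul_mem _ ⟨h, rfl⟩
  have hw1 : ‖w‖ = 1 := by
    rw [hw, norm_smul, norm_inv, norm_norm, inv_mul_cancel₀ (ne_of_gt hPhpos)]
  have hwK : w ∈ K := by
    refine ⟨⟨w, hwF⟩, ?_, rfl⟩
    simp [mem_sphere_zero_iff_norm, Submodule.norm_coe, hw1]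
  obtain ⟨u, hut, hwu⟩ := Set.mem_iUnion₂.mp (hcover hwK)
  have hdistwu : ‖w - u‖ < α / 8 := by
    rw [← dist_eq_norm]; exact Metric.mem_ball.mp hwu
  -- inner products
  have hinnerw : ⟪w, h⟫ = ‖P h‖ := by
    rw [hw, real_inner_smul_left, hPh h, sq]
    field_simp
  have habs1 : |⟪w - u, h⟫| ≤ ‖w - u‖ * ‖h‖ := abs_real_inner_le_norm _ _
  have hu_lb : ‖P h‖ - (α / 8) * ‖h‖ ≤ ⟪u, h⟫ := by
    have h1 : ⟪u, h⟫ = ⟪w, h⟫ - ⟪w - u, h⟫ := by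
      rw [inner_sub_left]; ring
    have h2 : ‖w - u‖ * ‖h‖ ≤ (α / 8) * ‖h‖ :=
      mul_le_mul_of_nonneg_right (le_of_lt hdistwu) (norm_nonneg _)
    rw [h1, hinnerw]
    have := abs_le.mp habs1
    linarith [this.2]
  set v : H := (Φ u).sum (fun i a => a • g i) with hv
  have habs2 : |⟪u - v, h⟫| ≤ ‖u - v‖ * ‖h‖ := abs_real_inner_le_norm _ _
  have hv_lb : (3 / 4) * ‖P h‖ ≤ ⟪v, h⟫ := by
    have h1 : ⟪v, h⟫ = ⟪u, h⟫ - ⟪u - v, h⟫ := by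
      rw [inner_sub_left]; ring
    have h2 : ‖u - v‖ * ‖h‖ ≤ (α / 8) * ‖h‖ :=
      mul_le_mul_of_nonneg_right (le_of_lt (hΦ u)) (norm_nonneg _)
    have h3 := (abs_le.mp habs2).2
    have h4 : (α / 4) * ‖h‖ ≤ ‖P h‖ / 4 := by linarith
    rw [h1]
    linarith
  have hv_expand : ⟪v, h⟫ = ∑ i ∈ (Φ u).support, (Φ u i) * ⟪g i, h⟫ := by
    rw [hv, Finsupp.sum, sum_inner]
    exact Finset.sum_congr rfl fun i _ => real_inner_smul_left _ _ _
  -- Cauchy–Schwarz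
  have hCS : ⟪v, h⟫ ^ 2 ≤
      (∑ i ∈ (Φ u).support, (Φ u i) ^ 2) * ∑ i ∈ (Φ u).support, ⟪g i, h⟫ ^ 2 := by
    rw [hv_expand]
    exact Finset.sum_mul_sq_le_sq_mul_sq _ _ _
  have hA_le : (∑ i ∈ (Φ u).support, (Φ u i) ^ 2) ≤ B :=
    Finset.single_le_sum (f := fun u => ∑ i ∈ (Φ u).support, (Φ u i) ^ 2)
      (fun u' _ => Finset.sum_nonneg fun i _ => sq_nonneg _) hut
  have hA0 : (0:ℝ) ≤ ∑ i ∈ (Φ u).support, (Φ u i) ^ 2 :=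
    Finset.sum_nonneg fun i _ => sq_nonneg _
  have hsub : (Φ u).support ⊆ Finset.range n := by
    intro i hi
    have h1 : i ≤ (Φ u).support.sup id := Finset.le_sup (f := id) hi
    have h2 : (Φ u).support.sup id ≤ t.sup fun u => (Φ u).support.sup id :=
      Finset.le_sup (f := fun u => (Φ u).support.sup id) hut
    have : i < N := by omega
    exact Finset.mem_range.mpr (lt_of_lt_of_le this hn)
  have hmono : ∑ i ∈ (Φ u).support, ⟪g i, h⟫ ^ 2 ≤ ∑ i ∈ Finset.range n, ⟪g i, h⟫ ^ 2 :=
    Finset.sum_le_sum_of_subset_of_nonneg hsub fun i _ _ => sq_nonneg _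
  have hsupp0 : (0:ℝ) ≤ ∑ i ∈ (Φ u).support, ⟪g i, h⟫ ^ 2 :=
    Finset.sum_nonneg fun i _ => sq_nonneg _
  have hsq : ((3 / 4) * ‖P h‖) ^ 2 ≤ ⟪v, h⟫ ^ 2 := by
    have : (0:ℝ) ≤ (3 / 4) * ‖P h‖ := by positivity
    nlinarith
  have hkey : (9 / 16) * ‖P h‖ ^ 2 ≤ (B + 1) * ∑ i ∈ Finset.range n, ⟪g i, h⟫ ^ 2 := by
    nlinarith [hCS, hA_le, hmono, hsupp0, hA0, hsq]
  rw [div_mul_eq_mul_div, div_le_iff₀ (by positivity : (0:ℝ) < 16 * (B + 1))]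
  nlinarith [hkey]
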